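/- arXiv:math/0603467 — 2 statements merged into one kernel-verified Lean document; each statement's English description precedes it below -/
import Mathlib

section
/- With N, q, and the matrices M_U, M_V, M_W as in the context, let u, v, h be nonzero complex numbers with v^N ≠ −1, and define L_U := (1 + q·M_V(v)⁻¹)⁻¹·(1 + q³·M_V(v)⁻¹)⁻¹·M_U(u), L_V := (1 + q·M_V(v))·(1 + q³·M_V(v))·M_W(u,v,h), and L_W := M_V(v)⁻¹. Then (L_U)^N = (u^N / (1 + v^{−N})²)·I, (L_V)^N = (h^N·(1 + v^N)² / (u^N·v^N))·I, and (L_W)^N = v^{−N}·I, where I is the N×N identity matrix. -/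
open Matrix

/-- The image of the generator `U` of the Chekhov–Fock algebra of the once-punctured torus
under the standard representation: the diagonal matrix with entries `u·q^{4i}`. -/
noncomputable def MU (N : ℕ) (q u : ℂ) : Matrix (Fin N) (Fin N) ℂ :=
  Matrix.diagonal fun i => u * q ^ (4 * (i : ℕ))

/-- The image of the generator `V`: the cyclic shift matrix with entries `v`. -/
noncomputable def MV (N : ℕ) (v : ℂ) : Matrix (Fin N) (Fin N) ℂ :=
  Matrix.of fun i j => if (j : ℕ) = ((i : ℕ) + 1) % N then v else 0

/-- The image of the generator `W`: `q⁻²·h·(M_U(u)·M_V(v))⁻¹`. -/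
noncomputable def MW (N : ℕ) (q u v h : ℂ) : Matrix (Fin N) (Fin N) ℂ :=
  ((q ^ 2)⁻¹ * h) • (MU N q u * MV N v)⁻¹

open Polynomial Finset

lemma aux_scalar {N : ℕ} (hNpos : 0 < N) (hN : Odd N) {q : ℂ} (hq : IsPrimitiveRoot q N)
    (x : ℂ) : ∏ ζ ∈ Polynomial.nthRootsFinset N (1 : ℂ), (1 + ζ * x) = 1 + x ^ N := by
  have h := hq.pow_sub_pow_eq_prod_sub_mul (x := (1:ℂ)) (y := -x) hNpos
  rw [one_pow, hN.neg_pow, sub_neg_eq_add] at h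
  rw [h]
  exact Finset.prod_congr rfl fun ζ _ => by ring

lemma aux_image {N : ℕ} (hNpos : 0 < N) {r : ℂ} (hr : IsPrimitiveRoot r N) :
    (Finset.range N).image (r ^ ·) = Polynomial.nthRootsFinset N (1 : ℂ) := by
  apply Finset.eq_of_subset_of_card_le
  · intro x hx
    simp only [Finset.mem_image, Finset.mem_range] at hx
    obtain ⟨j, hj, rfl⟩ := hx
    rw [Polynomial.mem_nthRootsFinset hNpos, ← pow_mul, mul_comm, pow_mul, hr.pow_eq_one, one_pow]
  · rw [hr.card_nthRootsFinset, Finset.card_image_of_injOn (by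
      intro a ha b hb hab
      exact hr.injOn_pow (Finset.mem_coe.mpr ha) (Finset.mem_coe.mpr hb) hab)]
    simp

lemma aux_scalar_range {N : ℕ} (hNpos : 0 < N) (hN : Odd N) {r : ℂ} (hr : IsPrimitiveRoot r N)
    (x : ℂ) : ∏ j ∈ Finset.range N, (1 + r ^ j * x) = 1 + x ^ N := by
  rw [← aux_scalar hNpos hN hr x, ← aux_image hNpos hr,
    Finset.prod_image (by
      intro a ha b hb hab
      exact hr.injOn_pow (Finset.mem_coe.mpr ha) (Finset.mem_coe.mpr hb) hab)]

lemma aux_poly {N : ℕ} (hNpos : 0 < N) (hN : Odd N) {r : ℂ} (hr : IsPrimitiveRoot r N)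
    (t : ℂ) (ht : t ^ N = 1) :
    ∏ j ∈ Finset.range N, (1 + Polynomial.C (t * r ^ j) * Polynomial.X) =
      1 + (Polynomial.X : ℂ[X]) ^ N := by
  apply Polynomial.funext
  intro x
  rw [Polynomial.eval_prod]
  simp only [Polynomial.eval_add, Polynomial.eval_one, Polynomial.eval_mul, Polynomial.eval_C,
    Polynomial.eval_pow, Polynomial.eval_X]
  have : ∀ j, 1 + t * r ^ j * x = 1 + r ^ j * (t * x) := fun j => by ring
  rw [Finset.prod_congr rfl (fun j _ => this j), aux_scalar_range hNpos hN hr (t * x),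
    mul_pow, ht, one_mul]

open Polynomial Finset Matrix

lemma aux_aeval_lin {N : ℕ} (S : Matrix (Fin N) (Fin N) ℂ) (c : ℂ) :
    Polynomial.aeval S (1 + Polynomial.C c * Polynomial.X) = 1 + c • S := by
  simp [Algebra.algebraMap_eq_smul_one, smul_mul_assoc]

-- helper: two-sided inverse powers
lemma aux_pow_inv {N : ℕ} {A B : Matrix (Fin N) (Fin N) ℂ}
    (h1 : A * B = 1) (h2 : B * A = 1) : ∀ k : ℕ, B ^ k * A ^ k = 1 := by
  intro k
  induction k with
  | zero => simp
  | succ k ih =>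
    rw [pow_succ B, pow_succ' A, mul_assoc, ← mul_assoc B A, h2, one_mul, ih]

lemma aux_pow_eq {N k : ℕ} {c : ℂ} {A B : Matrix (Fin N) (Fin N) ℂ}
    (h1 : A * B = 1) (h2 : B * A = 1) (hA : A ^ k = c • 1) (hc : c ≠ 0) :
    B ^ k = c⁻¹ • 1 := by
  have h := aux_pow_inv h1 h2 k
  rw [hA] at h
  have : B ^ k * (c • 1) = c • B ^ k := by
    rw [Matrix.mul_smul, mul_one]
  rw [this] at h
  calc B ^ k = c⁻¹ • (c • B ^ k) := by rw [smul_smul, inv_mul_cancel₀ hc, one_smul]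
  _ = c⁻¹ • (1 : Matrix (Fin N) (Fin N) ℂ) := by rw [h]

lemma aux_full {N : ℕ} (hNpos : 0 < N) (hN : Odd N) {r : ℂ} (hr : IsPrimitiveRoot r N)
    {S : Matrix (Fin N) (Fin N) ℂ} {s : ℂ} (hS : S ^ N = s • 1) {t : ℂ} (ht : t ^ N = 1) :
    Polynomial.aeval S (∏ j ∈ Finset.range N, (1 + Polynomial.C (t * r ^ j) * Polynomial.X))
      = (1 + s) • 1 := by
  rw [aux_poly hNpos hN hr t ht]
  simp only [map_add, _root_.map_one, map_pow, Polynomial.aeval_X]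
  rw [hS, add_smul, one_smul]

lemma aux_inv {N : ℕ} (hNpos : 0 < N) (hN : Odd N) {r : ℂ} (hr : IsPrimitiveRoot r N)
    {S : Matrix (Fin N) (Fin N) ℂ} {s : ℂ} (hS : S ^ N = s • 1) (hs : 1 + s ≠ 0)
    {t : ℂ} (ht : t ^ N = 1) :
    (1 + t • S) * (1 + t • S)⁻¹ = 1 ∧ (1 + t • S)⁻¹ * (1 + t • S) = 1 := by
  obtain ⟨n, rfl⟩ : ∃ n, N = n + 1 := ⟨N - 1, (Nat.succ_pred_eq_of_pos hNpos).symm⟩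
  have hfull := aux_full hNpos hN hr hS ht
  rw [Finset.prod_range_succ'] at hfull
  simp only [pow_zero, mul_one] at hfull
  rw [_root_.map_mul, aux_aeval_lin] at hfull
  set P := Polynomial.aeval S (∏ j ∈ Finset.range n,
    (1 + Polynomial.C (t * r ^ (j + 1)) * Polynomial.X)) with hP
  have hcomm : (1 + t • S) * P = (1 + s) • 1 := by
    have hswap : (1 + t • S) * P = P * (1 + t • S) := by
      rw [hP, ← aux_aeval_lin S t, ← _root_.map_mul, ← _root_.map_mul, mul_comm]
    rw [hswap]
    exact hfull
  have hright : (1 + t • S) * ((1 + s)⁻¹ • P) = 1 := by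
    rw [Matrix.mul_smul, hcomm, smul_smul, inv_mul_cancel₀ hs, one_smul]
  have hleft : ((1 + s)⁻¹ • P) * (1 + t • S) = 1 := by
    rw [Matrix.smul_mul, hfull, smul_smul, inv_mul_cancel₀ hs, one_smul]
  have hinv : (1 + t • S)⁻¹ = (1 + s)⁻¹ • P := Matrix.inv_eq_right_inv hright
  rw [hinv]
  exact ⟨hright, hleft⟩

lemma aux_comm_pow {N : ℕ} {r : ℂ} {S G : Matrix (Fin N) (Fin N) ℂ}
    (hGS : G * S = r • (S * G)) : ∀ k : ℕ, G ^ k * S = (r ^ k) • (S * G ^ k) := by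
  intro k
  induction k with
  | zero => simp
  | succ k ih =>
    calc G ^ (k + 1) * S = G ^ k * (G * S) := by rw [pow_succ, mul_assoc]
    _ = r • (G ^ k * S * G) := by rw [hGS, Matrix.mul_smul, mul_assoc]
    _ = r • ((r ^ k) • (S * G ^ k) * G) := by rw [ih]
    _ = (r ^ (k + 1)) • (S * G ^ (k + 1)) := by
        rw [Matrix.smul_mul, smul_smul, mul_assoc, ← pow_succ, ← pow_succ']
        

lemma aux_comm_lin {N : ℕ} {r : ℂ} {S G : Matrix (Fin N) (Fin N) ℂ}
    (hGS : G * S = r • (S * G)) (k : ℕ) (t : ℂ) :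
    G ^ k * (1 + t • S) = (1 + (t * r ^ k) • S) * G ^ k := by
  rw [mul_add, add_mul, mul_one, one_mul, Matrix.mul_smul, aux_comm_pow hGS k,
    Matrix.smul_mul, smul_smul]

lemma aux_comm_lin_inv {N : ℕ} (hNpos : 0 < N) (hN : Odd N) {r : ℂ} (hr : IsPrimitiveRoot r N)
    {S G : Matrix (Fin N) (Fin N) ℂ} {s : ℂ} (hS : S ^ N = s • 1) (hs : 1 + s ≠ 0)
    (hGS : G * S = r • (S * G)) (k : ℕ) {t : ℂ} (ht : t ^ N = 1) :
    G ^ k * (1 + t • S)⁻¹ = (1 + (t * r ^ k) • S)⁻¹ * G ^ k := by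
  have ht' : (t * r ^ k) ^ N = 1 := by
    rw [mul_pow, ← pow_mul, mul_comm k N, pow_mul, hr.pow_eq_one, one_pow, mul_one, ht]
  obtain ⟨h1, h2⟩ := aux_inv hNpos hN hr hS hs ht
  obtain ⟨h1', h2'⟩ := aux_inv hNpos hN hr hS hs ht'
  have key : (1 + (t * r ^ k) • S) * (G ^ k * (1 + t • S)⁻¹) = G ^ k := by
    rw [← mul_assoc, ← aux_comm_lin hGS k t, mul_assoc, h1, mul_one]
  calc G ^ k * (1 + t • S)⁻¹
      = ((1 + (t * r ^ k) • S)⁻¹ * (1 + (t * r ^ k) • S)) * (G ^ k * (1 + t • S)⁻¹) := by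
        rw [h2', one_mul]
    _ = (1 + (t * r ^ k) • S)⁻¹ * G ^ k := by rw [mul_assoc, key]

lemma aux_shuffle {n : ℕ} {P Gk A B A' B' G : Matrix (Fin n) (Fin n) ℂ}
    (hA : Gk * A = A' * Gk) (hB : Gk * B = B' * Gk) :
    P * Gk * (A * B * G) = P * (A' * B') * (Gk * G) := by
  calc P * Gk * (A * B * G) = P * ((Gk * A) * B * G) := by simp only [mul_assoc]
    _ = P * (A' * (Gk * B) * G) := by rw [hA]; simp only [mul_assoc]
    _ = P * (A' * (B' * Gk) * G) := by rw [hB]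
    _ = P * (A' * B') * (Gk * G) := by simp only [mul_assoc]

lemma aux_main_pos {N : ℕ} (hNpos : 0 < N) (hN : Odd N) {r : ℂ} (hr : IsPrimitiveRoot r N)
    {S G : Matrix (Fin N) (Fin N) ℂ} {s g t1 t2 : ℂ}
    (hS : S ^ N = s • 1) (hGS : G * S = r • (S * G)) (hG : G ^ N = g • 1)
    (ht1 : t1 ^ N = 1) (ht2 : t2 ^ N = 1) :
    ((1 + t1 • S) * (1 + t2 • S) * G) ^ N = (g * (1 + s) ^ 2) • 1 := by
  have key : ∀ k : ℕ, ((1 + t1 • S) * (1 + t2 • S) * G) ^ k =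
      Polynomial.aeval S (∏ j ∈ Finset.range k,
        ((1 + Polynomial.C (t1 * r ^ j) * Polynomial.X) *
          (1 + Polynomial.C (t2 * r ^ j) * Polynomial.X))) * G ^ k := by
    intro k
    induction k with
    | zero => simp
    | succ k ih =>
      rw [pow_succ, ih, aux_shuffle (aux_comm_lin hGS k t1) (aux_comm_lin hGS k t2),
        ← pow_succ G, Finset.prod_range_succ, _root_.map_mul, _root_.map_mul,
        aux_aeval_lin, aux_aeval_lin]
  rw [key N, Finset.prod_mul_distrib, _root_.map_mul, aux_full hNpos hN hr hS ht1,
    aux_full hNpos hN hr hS ht2, hG]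
  simp only [Matrix.smul_mul, Matrix.mul_smul, one_mul, mul_one, smul_smul]
  congr 1
  ring

lemma aux_main_neg {N : ℕ} (hNpos : 0 < N) (hN : Odd N) {r : ℂ} (hr : IsPrimitiveRoot r N)
    {S G : Matrix (Fin N) (Fin N) ℂ} {s g t1 t2 : ℂ}
    (hS : S ^ N = s • 1) (hGS : G * S = r • (S * G)) (hG : G ^ N = g • 1)
    (ht1 : t1 ^ N = 1) (ht2 : t2 ^ N = 1) (hs : 1 + s ≠ 0) :
    ((1 + t1 • S)⁻¹ * (1 + t2 • S)⁻¹ * G) ^ N = (g / (1 + s) ^ 2) • 1 := by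
  have key : ∀ k : ℕ, ((1 + t1 • S)⁻¹ * (1 + t2 • S)⁻¹ * G) ^ k =
      (Polynomial.aeval S (∏ j ∈ Finset.range k,
        ((1 + Polynomial.C (t2 * r ^ j) * Polynomial.X) *
          (1 + Polynomial.C (t1 * r ^ j) * Polynomial.X))))⁻¹ * G ^ k := by
    intro k
    induction k with
    | zero => simp
    | succ k ih =>
      have hfact : (Polynomial.aeval S (∏ j ∈ Finset.range (k + 1),
          ((1 + Polynomial.C (t2 * r ^ j) * Polynomial.X) *
            (1 + Polynomial.C (t1 * r ^ j) * Polynomial.X))))⁻¹ =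
          (Polynomial.aeval S (∏ j ∈ Finset.range k,
            ((1 + Polynomial.C (t2 * r ^ j) * Polynomial.X) *
              (1 + Polynomial.C (t1 * r ^ j) * Polynomial.X))))⁻¹ *
            ((1 + (t1 * r ^ k) • S)⁻¹ * (1 + (t2 * r ^ k) • S)⁻¹) := by
        rw [show (∏ j ∈ Finset.range (k + 1),
            ((1 + Polynomial.C (t2 * r ^ j) * Polynomial.X) *
              (1 + Polynomial.C (t1 * r ^ j) * Polynomial.X))) =
            ((1 + Polynomial.C (t2 * r ^ k) * Polynomial.X) *
              (1 + Polynomial.C (t1 * r ^ k) * Polynomial.X)) *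
            ∏ j ∈ Finset.range k,
              ((1 + Polynomial.C (t2 * r ^ j) * Polynomial.X) *
                (1 + Polynomial.C (t1 * r ^ j) * Polynomial.X)) from by
          rw [Finset.prod_range_succ]; ring]
        rw [_root_.map_mul, Matrix.mul_inv_rev, _root_.map_mul, Matrix.mul_inv_rev,
          aux_aeval_lin, aux_aeval_lin]
      rw [pow_succ, ih, aux_shuffle (aux_comm_lin_inv hNpos hN hr hS hs hGS k ht1)
        (aux_comm_lin_inv hNpos hN hr hS hs hGS k ht2), ← pow_succ G, hfact]
  rw [key N, Finset.prod_mul_distrib, _root_.map_mul, aux_full hNpos hN hr hS ht1,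
    aux_full hNpos hN hr hS ht2, hG]
  have hsq : ((1 + s) • (1 : Matrix (Fin N) (Fin N) ℂ)) * ((1 + s) • 1) = ((1 + s) ^ 2) • 1 := by
    rw [Matrix.smul_mul, Matrix.mul_smul, one_mul, smul_smul, sq]
  rw [hsq]
  have hne : (1 + s) ^ 2 ≠ 0 := pow_ne_zero 2 hs
  have hinv : (((1 + s) ^ 2) • (1 : Matrix (Fin N) (Fin N) ℂ))⁻¹ = ((1 + s) ^ 2)⁻¹ • 1 := by
    apply Matrix.inv_eq_right_inv
    rw [Matrix.smul_mul, one_mul, smul_smul, mul_inv_cancel₀ hne, one_smul]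
  rw [hinv, Matrix.smul_mul, one_mul, smul_smul, div_eq_mul_inv]
  congr 1
  ring

lemma MV_pow {N : ℕ} (hNpos : 0 < N) (v : ℂ) (k : ℕ) :
    (MV N v) ^ k =
      Matrix.of fun i j : Fin N => if (j : ℕ) = ((i : ℕ) + k) % N then v ^ k else 0 := by
  induction k with
  | zero =>
    ext i j
    simp only [pow_zero, Matrix.one_apply, Matrix.of_apply, Nat.add_zero,
      Nat.mod_eq_of_lt i.isLt]
    by_cases hij : i = j
    · subst hij; simp
    · rw [if_neg hij, if_neg fun hc => hij (Fin.ext hc.symm)]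
  | succ k ih =>
    rw [pow_succ, ih]
    ext i j
    rw [Matrix.mul_apply]
    rw [Finset.sum_eq_single (⟨((i : ℕ) + k) % N, Nat.mod_lt _ hNpos⟩ : Fin N)]
    · simp only [Matrix.of_apply, MV]
      simp only [if_true]
      have hmm : (((i : ℕ) + k) % N + 1) % N = ((i : ℕ) + (k + 1)) % N := by
        rw [Nat.mod_add_mod, Nat.add_assoc]
      rw [hmm]
      by_cases hj : (j : ℕ) = ((i : ℕ) + (k + 1)) % N
      · rw [if_pos hj, if_pos hj, pow_succ]
      · rw [if_neg hj, if_neg hj, mul_zero]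
    · intro b _ hb
      simp only [Matrix.of_apply]
      rw [if_neg, zero_mul]
      intro hc
      exact hb (Fin.ext hc)
    · intro hmem
      exact absurd (Finset.mem_univ _) hmem

lemma MV_pow_N {N : ℕ} (hNpos : 0 < N) (v : ℂ) : (MV N v) ^ N = (v ^ N) • 1 := by
  rw [MV_pow hNpos]
  ext i j
  simp only [Matrix.of_apply, Matrix.smul_apply, Matrix.one_apply, Nat.add_mod_right,
    Nat.mod_eq_of_lt i.isLt]
  by_cases hij : i = j
  · subst hij; simp
  · rw [if_neg fun hc => hij (Fin.ext hc.symm), if_neg hij, smul_zero]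

lemma MU_pow_N {N : ℕ} {q : ℂ} (hq : IsPrimitiveRoot q N) (u : ℂ) :
    (MU N q u) ^ N = (u ^ N) • 1 := by
  rw [MU, Matrix.diagonal_pow]
  have hd : ∀ i : Fin N, (u * q ^ (4 * (i : ℕ))) ^ N = u ^ N := fun i => by
    rw [mul_pow, ← pow_mul, mul_comm (4 * (i : ℕ)) N, pow_mul, hq.pow_eq_one, one_pow, mul_one]
  ext i j
  by_cases hij : i = j
  · subst hij
    simp [Matrix.diagonal_apply_eq, Matrix.one_apply, hd, Pi.pow_apply]
  · simp [Matrix.diagonal_apply_ne _ hij, Matrix.one_apply_ne hij]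

lemma MV_MU_comm {N : ℕ} {q : ℂ} (hq : IsPrimitiveRoot q N) (u v : ℂ) :
    MV N v * MU N q u = (q ^ 4) • (MU N q u * MV N v) := by
  have hmod : ∀ a : ℕ, q ^ (a % N) = q ^ a := fun a => by
    conv_rhs => rw [← Nat.div_add_mod a N]
    rw [pow_add, pow_mul, hq.pow_eq_one, one_pow, one_mul]
  ext i j
  by_cases hj : (j : ℕ) = ((i : ℕ) + 1) % N
  · have hpow : q ^ (4 * (((i : ℕ) + 1) % N)) = q ^ (4 * ((i : ℕ) + 1)) := by
      rw [mul_comm 4, pow_mul, hmod, ← pow_mul, mul_comm]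
    simp only [MV, MU, Matrix.smul_apply, Matrix.mul_diagonal, Matrix.diagonal_mul,
      Matrix.of_apply, if_pos hj, hj, smul_eq_mul]
    rw [hpow, Nat.mul_add, pow_add]
    ring
  · simp only [MV, MU, Matrix.smul_apply, Matrix.mul_diagonal, Matrix.diagonal_mul,
      Matrix.of_apply, if_neg hj, smul_eq_mul]
    ring

lemma aux_prod_pow {N : ℕ} {r : ℂ} {A B : Matrix (Fin N) (Fin N) ℂ}
    (hBA : B * A = r • (A * B)) (k : ℕ) :
    (A * B) ^ k = (∏ j ∈ Finset.range k, r ^ j) • (A ^ k * B ^ k) := by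
  induction k with
  | zero => simp
  | succ k ih =>
    rw [pow_succ, ih, Finset.prod_range_succ]
    have e1 : A ^ k * B ^ k * (A * B) = A ^ k * (B ^ k * A) * B := by
      simp only [mul_assoc]
    rw [Matrix.smul_mul, e1, aux_comm_pow hBA k, Matrix.mul_smul, Matrix.smul_mul,
      smul_smul]
    have e2 : A ^ k * (A * B ^ k) * B = A ^ (k + 1) * B ^ (k + 1) := by
      rw [pow_succ, pow_succ]
      simp only [mul_assoc]
    rw [e2]

/-- The `N`-th powers of the images `L_U, L_V, L_W` of `U, V, W` under `χ_{u,v,h} ∘ ℒ`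
are the scalar matrices `u^N/(1+v^{−N})²`, `h^N (1+v^N)²/(u^N v^N)`, and `v^{−N}`. -/
theorem stmt11 (N : ℕ) (hN : Odd N) (hNpos : 0 < N) (q : ℂ) (hq : IsPrimitiveRoot q N)
    (u v h : ℂ) (hu : u ≠ 0) (hv : v ≠ 0) (hh : h ≠ 0) (hvn : v ^ N ≠ -1)
    (LU LV LW : Matrix (Fin N) (Fin N) ℂ)
    (hLU : LU = (1 + q • (MV N v)⁻¹)⁻¹ * (1 + q ^ 3 • (MV N v)⁻¹)⁻¹ * MU N q u)
    (hLV : LV = (1 + q • MV N v) * (1 + q ^ 3 • MV N v) * MW N q u v h)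
    (hLW : LW = (MV N v)⁻¹) :
    LU ^ N = (u ^ N / (1 + (v ^ N)⁻¹) ^ 2) • (1 : Matrix (Fin N) (Fin N) ℂ) ∧
    LV ^ N = (h ^ N * (1 + v ^ N) ^ 2 / (u ^ N * v ^ N)) • (1 : Matrix (Fin N) (Fin N) ℂ) ∧
    LW ^ N = (v ^ N)⁻¹ • (1 : Matrix (Fin N) (Fin N) ℂ) := by
  have hN1 : N - 1 + 1 = N := Nat.succ_pred_eq_of_pos hNpos
  set V := MV N v with hVdef
  set U := MU N q u with hUdef
  have hVN : V ^ N = (v ^ N) • 1 := MV_pow_N hNpos v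
  have hvN : v ^ N ≠ 0 := pow_ne_zero N hv
  -- invertibility of V
  have hVmul : V * V ^ (N - 1) = V ^ N := mul_pow_sub_one hNpos.ne' V
  have hVmul' : V ^ (N - 1) * V = V ^ N := pow_sub_one_mul hNpos.ne' V
  have h1 : V * ((v ^ N)⁻¹ • V ^ (N - 1)) = 1 := by
    rw [Matrix.mul_smul, hVmul, hVN, smul_smul, inv_mul_cancel₀ hvN, one_smul]
  have h2 : ((v ^ N)⁻¹ • V ^ (N - 1)) * V = 1 := by
    rw [Matrix.smul_mul, hVmul', hVN, smul_smul, inv_mul_cancel₀ hvN, one_smul]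
  have hVinv : V⁻¹ = (v ^ N)⁻¹ • V ^ (N - 1) := Matrix.inv_eq_right_inv h1
  have hVV : V * V⁻¹ = 1 := by rw [hVinv]; exact h1
  have hVV' : V⁻¹ * V = 1 := by rw [hVinv]; exact h2
  have hSN : (V⁻¹) ^ N = ((v ^ N)⁻¹) • 1 := aux_pow_eq hVV hVV' hVN hvN
  -- primitive root q^4
  have h2c : Nat.Coprime 2 N := Nat.coprime_two_left.mpr hN
  have hcop : Nat.Coprime 4 N := by
    have h4 : Nat.Coprime (2 * 2) N := Nat.Coprime.mul h2c h2c
    simpa using h4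
  have hq4 : IsPrimitiveRoot (q ^ 4) N := hq.pow_of_coprime 4 hcop
  -- commutations
  have hVU : V * U = (q ^ 4) • (U * V) := MV_MU_comm hq u v
  have hUS : U * V⁻¹ = (q ^ 4) • (V⁻¹ * U) := by
    calc U * V⁻¹ = V⁻¹ * (V * U) * V⁻¹ := by rw [← mul_assoc, hVV', one_mul]
      _ = V⁻¹ * ((q ^ 4) • (U * V)) * V⁻¹ := by rw [hVU]
      _ = (q ^ 4) • (V⁻¹ * U * (V * V⁻¹)) := by
          rw [Matrix.mul_smul, Matrix.smul_mul]
          simp only [mul_assoc]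
      _ = (q ^ 4) • (V⁻¹ * U) := by rw [hVV, mul_one]
  have hUN : U ^ N = (u ^ N) • 1 := MU_pow_N hq u
  -- nonvanishing scalars
  have hs2 : (1 : ℂ) + v ^ N ≠ 0 := fun hc => hvn (by linear_combination hc)
  have hs1 : (1 : ℂ) + (v ^ N)⁻¹ ≠ 0 := by
    intro hc
    have hinv : (v ^ N)⁻¹ = -1 := by linear_combination hc
    apply hvn
    rw [← inv_inv (v ^ N), hinv]
    norm_num
  have htq : q ^ N = 1 := hq.pow_eq_one
  have htq3 : (q ^ 3) ^ N = 1 := by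
    rw [← pow_mul, mul_comm, pow_mul, htq, one_pow]
  -- LU
  have hLUpow : LU ^ N = (u ^ N / (1 + (v ^ N)⁻¹) ^ 2) • 1 := by
    rw [hLU]
    exact aux_main_neg hNpos hN hq4 hSN hUS hUN htq htq3 hs1
  -- K = U * V
  have hKN : (U * V) ^ N = (u ^ N * v ^ N) • 1 := by
    obtain ⟨m, hm⟩ := Nat.Odd.sub_odd hN odd_one
    have hsum : ∑ j ∈ Finset.range N, j = N * m := by
      have h2s := Finset.sum_range_id_mul_two N
      rw [hm, Nat.mul_add] at h2s
      omega
    have hq4N : (q ^ 4) ^ N = 1 := by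
      rw [← pow_mul, mul_comm, pow_mul, htq, one_pow]
    have hprod : (∏ j ∈ Finset.range N, (q ^ 4) ^ j) = 1 := by
      rw [Finset.prod_pow_eq_pow_sum, hsum, pow_mul, hq4N, one_pow]
    rw [aux_prod_pow hVU N, hprod, one_smul, hUN, hVN, Matrix.smul_mul, Matrix.mul_smul,
      one_mul, smul_smul]
  have hKne : u ^ N * v ^ N ≠ 0 := mul_ne_zero (pow_ne_zero N hu) hvN
  have hKmul : (U * V) * (U * V) ^ (N - 1) = (U * V) ^ N := mul_pow_sub_one hNpos.ne' _
  have hKmul' : (U * V) ^ (N - 1) * (U * V) = (U * V) ^ N := pow_sub_one_mul hNpos.ne' _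
  have hk1 : (U * V) * ((u ^ N * v ^ N)⁻¹ • (U * V) ^ (N - 1)) = 1 := by
    rw [Matrix.mul_smul, hKmul, hKN, smul_smul, inv_mul_cancel₀ hKne, one_smul]
  have hk2 : ((u ^ N * v ^ N)⁻¹ • (U * V) ^ (N - 1)) * (U * V) = 1 := by
    rw [Matrix.smul_mul, hKmul', hKN, smul_smul, inv_mul_cancel₀ hKne, one_smul]
  have hKinv : (U * V)⁻¹ = (u ^ N * v ^ N)⁻¹ • (U * V) ^ (N - 1) :=
    Matrix.inv_eq_right_inv hk1
  have hKK : (U * V) * (U * V)⁻¹ = 1 := by rw [hKinv]; exact hk1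
  have hKK' : (U * V)⁻¹ * (U * V) = 1 := by rw [hKinv]; exact hk2
  have hKinvN : ((U * V)⁻¹) ^ N = (u ^ N * v ^ N)⁻¹ • 1 := aux_pow_eq hKK hKK' hKN hKne
  -- MW
  have hMW : MW N q u v h = ((q ^ 2)⁻¹ * h) • (U * V)⁻¹ := rfl
  have hcN : ((q ^ 2)⁻¹ * h) ^ N = h ^ N := by
    rw [mul_pow, inv_pow, ← pow_mul, mul_comm 2 N, pow_mul, htq, one_pow, inv_one, one_mul]
  have hMWN : (MW N q u v h) ^ N = (h ^ N * (u ^ N * v ^ N)⁻¹) • 1 := by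
    rw [hMW, _root_.smul_pow, hKinvN, smul_smul, hcN]
  -- MW commutation with V
  have hVK : V * (U * V) = (q ^ 4) • ((U * V) * V) := by
    rw [← mul_assoc, hVU, Matrix.smul_mul, mul_assoc]
  have hKiV : (U * V)⁻¹ * V = (q ^ 4) • (V * (U * V)⁻¹) := by
    calc (U * V)⁻¹ * V = (U * V)⁻¹ * (V * (U * V)) * (U * V)⁻¹ := by
          rw [mul_assoc, mul_assoc, hKK, mul_one]
      _ = (U * V)⁻¹ * ((q ^ 4) • ((U * V) * V)) * (U * V)⁻¹ := by rw [hVK]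
      _ = (q ^ 4) • ((U * V)⁻¹ * (U * V) * (V * (U * V)⁻¹)) := by
          rw [Matrix.mul_smul, Matrix.smul_mul]
          simp only [mul_assoc]
      _ = (q ^ 4) • (V * (U * V)⁻¹) := by rw [hKK', one_mul]
  have hMWV : MW N q u v h * V = (q ^ 4) • (V * MW N q u v h) := by
    simp only [hMW, Matrix.smul_mul, hKiV, Matrix.mul_smul, smul_smul]
    congr 1
    ring
  -- LV
  have hLVpow : LV ^ N = (h ^ N * (1 + v ^ N) ^ 2 / (u ^ N * v ^ N)) • 1 := by
    rw [hLV]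
    rw [aux_main_pos hNpos hN hq4 hVN hMWV hMWN htq htq3]
    congr 1
    field_simp
  exact ⟨hLUpow, hLVpow, by rw [hLW]; exact hSN⟩
end

section
/- With N, q, and the matrix C_L = G·C̃_L as in the context, suppose u, v, h, u″, v″ are nonzero complex numbers with v^N ≠ −1, (u″)^N = u^N / (1 + v^{−N})², and (v″)^N = h^N·(1 + v^N)² / (u^N·v^N). Then the matrix C_L is invertible. -/
open Matrix

/-- The matrix `G` with `(i,j)`-entry `q^{4ij}`. -/
noncomputable def Gmat (N : ℕ) (q : ℂ) : Matrix (Fin N) (Fin N) ℂ :=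
  Matrix.of fun i j => q ^ (4 * (i : ℕ) * (j : ℕ))

/-- The matrix `C̃_L(u,v,u″,v″,h)` with `(i,j)`-entry
`q^{2(j−i)²+2i²}·(u″v″/(vh))^{j−i}·(uvv″/h)^i·∏_{α=1}^{i}[(1+q^{4α−3}v)(1+q^{4α−1}v)]⁻¹`. -/
noncomputable def CLtilde (N : ℕ) (q u v u'' v'' h : ℂ) : Matrix (Fin N) (Fin N) ℂ :=
  Matrix.of fun i j =>
    q ^ (2 * ((j : ℤ) - (i : ℤ)) ^ 2 + 2 * (i : ℤ) ^ 2) *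
      (u'' * v'' / (v * h)) ^ ((j : ℤ) - (i : ℤ)) *
      (u * v * v'' / h) ^ (i : ℕ) *
      ∏ α ∈ Finset.range (i : ℕ),
        ((1 + q ^ (4 * α + 1) * v) * (1 + q ^ (4 * α + 3) * v))⁻¹

/-- The intertwining matrix `C_L := G·C̃_L`. -/
noncomputable def CL (N : ℕ) (q u v u'' v'' h : ℂ) : Matrix (Fin N) (Fin N) ℂ :=
  Gmat N q * CLtilde N q u v u'' v'' h

/-- The matrix `C_L` is invertible. -/
theorem stmt14 (N : ℕ) (hN : Odd N) (hNpos : 0 < N) (q : ℂ) (hq : IsPrimitiveRoot q N)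
    (u v h u'' v'' : ℂ) (hu : u ≠ 0) (hv : v ≠ 0) (hh : h ≠ 0)
    (hu'' : u'' ≠ 0) (hv'' : v'' ≠ 0) (hvn : v ^ N ≠ -1)
    (hu''N : u'' ^ N = u ^ N / (1 + (v ^ N)⁻¹) ^ 2)
    (hv''N : v'' ^ N = h ^ N * (1 + v ^ N) ^ 2 / (u ^ N * v ^ N)) :
    IsUnit (CL N q u v u'' v'' h) := by
  classical
  have hq0 : q ≠ 0 := hq.ne_zero hNpos.ne'
  have hqN : q ^ N = 1 := hq.pow_eq_one
  set ζ : ℂ := q ^ 4 with hζdef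
  have hζ0 : ζ ≠ 0 := pow_ne_zero _ hq0
  have hζ : IsPrimitiveRoot ζ N := by
    have h2 : Nat.Coprime 2 N := Nat.coprime_two_left.mpr hN
    have h4 : Nat.Coprime 4 N := by
      have := h2.pow_left 2
      simpa using this
    exact hq.pow_of_coprime 4 h4
  -- nonvanishing of factors 1 + q^m v
  have hfac : ∀ m : ℕ, 1 + q ^ m * v ≠ 0 := by
    intro m h0
    apply hvn
    have hqv : q ^ m * v = -1 := by linear_combination h0
    have hqm : (q ^ m) ^ N = 1 := by
      rw [← pow_mul, mul_comm, pow_mul, hqN, one_pow]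
    have := congrArg (· ^ N) hqv
    simp only [mul_pow, hqm, one_mul] at this
    rw [this]
    exact hN.neg_one_pow
  -- prod nonzero
  have hP : ∀ i : ℕ,
      (∏ α ∈ Finset.range i, ((1 + q ^ (4 * α + 1) * v) * (1 + q ^ (4 * α + 3) * v))⁻¹) ≠ 0 := by
    intro i
    apply Finset.prod_ne_zero_iff.mpr
    intro α _
    exact inv_ne_zero (mul_ne_zero (hfac _) (hfac _))
  set w : ℂ := u'' * v'' / (v * h) with hwdef
  have hw0 : w ≠ 0 := by
    apply div_ne_zero (mul_ne_zero hu'' hv'') (mul_ne_zero hv hh)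
  set s : ℂ := u * v * v'' / h with hsdef
  set a : Fin N → ℂ := fun i =>
    q ^ (4 * (i : ℕ) ^ 2) * (s / w) ^ (i : ℕ) *
      ∏ α ∈ Finset.range (i : ℕ),
        ((1 + q ^ (4 * α + 1) * v) * (1 + q ^ (4 * α + 3) * v))⁻¹ with hadef
  set b : Fin N → ℂ := fun j => q ^ (2 * (j : ℕ) ^ 2) * w ^ (j : ℕ) with hbdef
  set Gb : Matrix (Fin N) (Fin N) ℂ :=
    Matrix.of (fun i j => (ζ ^ ((i : ℕ) * (j : ℕ)))⁻¹) with hGbdef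
  -- G * Gb = N • 1
  have hmul : Gmat N q * Gb = (N : ℂ) • 1 := by
    ext i k
    have hterm : ∀ j : Fin N,
        q ^ (4 * (i : ℕ) * (j : ℕ)) * (ζ ^ ((j : ℕ) * (k : ℕ)))⁻¹
          = (ζ ^ (i : ℕ) * (ζ ^ (k : ℕ))⁻¹) ^ (j : ℕ) := by
      intro j
      simp only [hζdef, mul_pow, ← inv_pow, ← pow_mul]
      ring_nf
    rw [Matrix.mul_apply]
    simp only [Gmat, Gb, Matrix.of_apply]
    rw [Finset.sum_congr rfl fun j _ => hterm j]
    rw [Fin.sum_univ_eq_sum_range (fun j => (ζ ^ (i : ℕ) * (ζ ^ (k : ℕ))⁻¹) ^ j) N]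
    by_cases hik : i = k
    · subst hik
      rw [mul_inv_cancel₀ (pow_ne_zero _ hζ0)]
      simp [Matrix.one_apply]
    · have hx1 : ζ ^ (i : ℕ) * (ζ ^ (k : ℕ))⁻¹ ≠ 1 := by
        rw [Ne, mul_inv_eq_one₀ (pow_ne_zero _ hζ0)]
        intro he
        exact hik (Fin.ext (hζ.pow_inj i.isLt k.isLt he))
      rw [geom_sum_eq hx1]
      have hxN : (ζ ^ (i : ℕ) * (ζ ^ (k : ℕ))⁻¹) ^ N = 1 := by
        rw [mul_pow, ← pow_mul, mul_comm (i:ℕ) N, pow_mul, hζ.pow_eq_one, one_pow,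
          inv_pow, ← pow_mul, mul_comm (k:ℕ) N, pow_mul, hζ.pow_eq_one, one_pow, inv_one, mul_one]
      rw [hxN]
      simp [Matrix.one_apply, hik]
  have hdet1 : (Gmat N q).det * Gb.det = (N : ℂ) ^ N := by
    have := congrArg Matrix.det hmul
    rwa [Matrix.det_mul, Matrix.det_smul, Matrix.det_one, Fintype.card_fin, mul_one] at this
  have hNne : ((N : ℂ)) ^ N ≠ 0 := pow_ne_zero _ (Nat.cast_ne_zero.mpr hNpos.ne')
  have hdetG : (Gmat N q).det ≠ 0 := fun h0 => hNne (by rw [← hdet1, h0, zero_mul])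
  have hdetGb : Gb.det ≠ 0 := fun h0 => hNne (by rw [← hdet1, h0, mul_zero])
  -- decomposition of CLtilde
  have hdecomp : CLtilde N q u v u'' v'' h
      = Matrix.diagonal a * Gb * Matrix.diagonal b := by
    ext i j
    rw [Matrix.mul_diagonal, Matrix.diagonal_mul]
    simp only [CLtilde, Gb, Matrix.of_apply, hadef, hbdef]
    have hzq : q ^ (2 * ((j : ℤ) - (i : ℤ)) ^ 2 + 2 * (i : ℤ) ^ 2)
        = q ^ (4 * (i : ℕ) ^ 2) * (ζ ^ ((i : ℕ) * (j : ℕ)))⁻¹ * q ^ (2 * (j : ℕ) ^ 2) := by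
      have e1 : (2 * ((j : ℤ) - (i : ℤ)) ^ 2 + 2 * (i : ℤ) ^ 2)
          = ((4 * (i : ℕ) ^ 2 : ℕ) : ℤ) + (-((4 * ((i : ℕ) * (j : ℕ)) : ℕ) : ℤ))
            + ((2 * (j : ℕ) ^ 2 : ℕ) : ℤ) := by
        push_cast; ring
      rw [e1, zpow_add₀ hq0, zpow_add₀ hq0, _root_.zpow_neg, zpow_natCast, zpow_natCast,
        zpow_natCast, hζdef, pow_mul]
      ring_nf
    have hzw : w ^ ((j : ℤ) - (i : ℤ)) = w ^ (j : ℕ) * ((w ^ (i : ℕ))⁻¹) := by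
      rw [zpow_sub₀ hw0, zpow_natCast, zpow_natCast, div_eq_mul_inv]
    rw [hzq, hzw, div_pow, div_eq_mul_inv]
    ring
  have hdetCLt : (CLtilde N q u v u'' v'' h).det ≠ 0 := by
    rw [hdecomp, Matrix.det_mul, Matrix.det_mul, Matrix.det_diagonal, Matrix.det_diagonal]
    apply mul_ne_zero
    apply mul_ne_zero
    · apply Finset.prod_ne_zero_iff.mpr
      intro i _
      exact mul_ne_zero (mul_ne_zero (pow_ne_zero _ hq0)
        (pow_ne_zero _ (div_ne_zero (div_ne_zero (mul_ne_zero (mul_ne_zero hu hv) hv'') hh) hw0)))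
        (hP _)
    · exact hdetGb
    · apply Finset.prod_ne_zero_iff.mpr
      intro j _
      exact mul_ne_zero (pow_ne_zero _ hq0) (pow_ne_zero _ hw0)
  rw [Matrix.isUnit_iff_isUnit_det, isUnit_iff_ne_zero, CL, Matrix.det_mul]
  exact mul_ne_zero hdetG hdetCLt
end
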